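/- Let F(x,y,z,t) ∈ C[x,y,z,t] be a nonzero polynomial satisfying: (1) F is irreducible and F ∉ C[z,t]; (2) the set of (z0,t0) ∈ C^2 such that F(x,y,z0,t0) is reducible in C[x,y] is finite; (3) for each (z0,t0) ∈ C^2, the set of (z1,t1) ∈ C^2 for which there exists λ ∈ C with F(x,y,z0,t0) = λ·F(x,y,z1,t1) as polynomials in C[x,y] is finite. Then F is non-Cartesian. -/

import Mathlib

open MvPolynomial

/-- A polynomial `P ∈ ℂ[x,y,z,t]` is Cartesian if `P = G(x,y)·F1 + H(z,t)·F2`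
with `G`, `H` non-constant. -/
def IsCartesian (P : MvPolynomial (Fin 4) ℂ) : Prop :=
  ∃ (G H : MvPolynomial (Fin 2) ℂ) (F1 F2 : MvPolynomial (Fin 4) ℂ),
    (∀ c : ℂ, G ≠ MvPolynomial.C c) ∧ (∀ c : ℂ, H ≠ MvPolynomial.C c) ∧
    P = MvPolynomial.rename (![0, 1] : Fin 2 → Fin 4) G * F1
        + MvPolynomial.rename (![2, 3] : Fin 2 → Fin 4) H * F2

/-- Substituting `(z,t) := (z0,t0)` in `F(x,y,z,t)`, producing a polynomial in `ℂ[x,y]`. -/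
noncomputable def specializeZT (p : ℂ × ℂ) (F : MvPolynomial (Fin 4) ℂ) :
    MvPolynomial (Fin 2) ℂ :=
  MvPolynomial.aeval
    (![MvPolynomial.X 0, MvPolynomial.X 1, MvPolynomial.C p.1, MvPolynomial.C p.2]) F

/-- Units of `ℂ[x,y]` are the nonzero constants. -/
lemma NonCartAux.isUnit_eq_C {A : MvPolynomial (Fin 2) ℂ} (h : IsUnit A) :
    ∃ c : ℂ, c ≠ 0 ∧ A = C c := by
  let e1 := MvPolynomial.finSuccEquiv ℂ 1
  have h1 : IsUnit (e1 A) := h.map e1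
  obtain ⟨r, hr, hrA⟩ := Polynomial.isUnit_iff.mp h1
  let e0 := MvPolynomial.finSuccEquiv ℂ 0
  have h0 : IsUnit (e0 r) := hr.map e0
  obtain ⟨s, hs, hsr⟩ := Polynomial.isUnit_iff.mp h0
  obtain ⟨c, hc⟩ : ∃ c : ℂ, s = C c := ⟨_, MvPolynomial.eq_C_of_isEmpty s⟩
  have hcu : IsUnit c := by
    subst hc
    simpa only [MvPolynomial.constantCoeff_C] using hs.map (MvPolynomial.constantCoeff (R := ℂ) (σ := Fin 0))
  refine ⟨c, hcu.ne_zero, ?_⟩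
  have hralg : r = algebraMap ℂ _ c := by
    have hcc : Polynomial.C s = algebraMap ℂ (Polynomial (MvPolynomial (Fin 0) ℂ)) c := by
      rw [hc]; simp [MvPolynomial.algebraMap_eq, Polynomial.algebraMap_apply]
    calc r = e0.symm (e0 r) := (e0.symm_apply_apply r).symm
    _ = e0.symm (Polynomial.C s) := by rw [hsr]
    _ = algebraMap ℂ _ c := by rw [hcc, AlgEquiv.commutes]
  have he1 : e1 A = algebraMap ℂ _ c := by
    rw [← hrA, hralg]; simp [Polynomial.algebraMap_apply]
  have he2 := congrArg e1.symm he1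
  rw [e1.symm_apply_apply] at he2
  rw [he2, AlgEquiv.commutes]
  simp [MvPolynomial.algebraMap_eq]

lemma NonCartAux.eval_aeval_poly (v : Fin 2 → Polynomial ℂ) (x : ℂ)
    (H : MvPolynomial (Fin 2) ℂ) :
    Polynomial.eval x (aeval v H) = eval (fun i => Polynomial.eval x (v i)) H := by
  have key : (Polynomial.aeval x : Polynomial ℂ →ₐ[ℂ] ℂ).comp (MvPolynomial.aeval v)
      = MvPolynomial.aeval (fun i => Polynomial.eval x (v i)) := by
    apply MvPolynomial.algHom_ext
    intro i
    simp
  have h2 := congrArg (fun f : MvPolynomial (Fin 2) ℂ →ₐ[ℂ] ℂ => f H) key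
  simp only [AlgHom.comp_apply] at h2
  rw [Polynomial.aeval_def, Polynomial.eval₂_eq_eval_map] at h2
  simp only [Algebra.algebraMap_self, Polynomial.map_id] at h2
  rw [h2]
  rw [show (MvPolynomial.aeval (fun i => Polynomial.eval x (v i)) H : ℂ)
    = MvPolynomial.eval (fun i => Polynomial.eval x (v i)) H from by
      rw [← MvPolynomial.coe_aeval_eq_eval]; rfl]

lemma NonCartAux.eval_aeval_poly' (v : Fin 2 → Polynomial ℂ) (w : Fin 2 → ℂ) (x : ℂ)
    (hvw : ∀ i, Polynomial.eval x (v i) = w i) (H : MvPolynomial (Fin 2) ℂ) :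
    Polynomial.eval x (aeval v H) = eval w H := by
  rw [NonCartAux.eval_aeval_poly, show (fun i => Polynomial.eval x (v i)) = w from funext hvw]

/-- The zero set of a nonconstant polynomial in two variables over `ℂ` is infinite. -/
lemma NonCartAux.zero_set_infinite {H : MvPolynomial (Fin 2) ℂ} (hH : ∀ c : ℂ, H ≠ C c) :
    {p : ℂ × ℂ | eval ![p.1, p.2] H = 0}.Infinite := by
  classical
  set g : ℂ → Polynomial ℂ := fun a => aeval ![Polynomial.X, Polynomial.C a] H with hgdef
  have hg : ∀ a x : ℂ, (g a).eval x = eval ![x, a] H := by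
    intro a x
    apply NonCartAux.eval_aeval_poly'
    intro i; fin_cases i <;> simp
  by_cases hD : {a : ℂ | 0 < (g a).degree}.Infinite
  · set f : ℂ → ℂ := fun a =>
      if h : 0 < (g a).degree then Classical.choose (Complex.exists_root h) else 0 with hfdef
    have hf : ∀ a ∈ {a : ℂ | 0 < (g a).degree}, eval ![f a, a] H = 0 := by
      intro a ha
      rw [← hg]
      simp only [Set.mem_setOf_eq] at ha
      have h1 := Classical.choose_spec (Complex.exists_root ha)
      simp only [hfdef]
      rw [dif_pos ha]
      exact h1
    exact Set.infinite_of_injOn_mapsTo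
      (f := fun a => (f a, a))
      (fun a _ b _ hab => congrArg Prod.snd hab)
      (fun a ha => hf a ha) hD
  · rw [Set.not_infinite] at hD
    have hDc : {a : ℂ | 0 < (g a).degree}ᶜ.Infinite := hD.infinite_compl
    have hconst : ∀ a ∈ {a : ℂ | 0 < (g a).degree}ᶜ, ∀ x : ℂ,
        eval ![x, a] H = eval ![0, a] H := by
      intro a ha x
      have hdeg : (g a).degree ≤ 0 := le_of_not_gt ha
      have h1 := Polynomial.eq_C_of_degree_le_zero hdeg
      rw [← hg, ← hg, h1]
      simp
    have hall : ∀ x a : ℂ, eval ![x, a] H = eval ![0, a] H := by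
      intro x a
      set r : Polynomial ℂ := aeval ![Polynomial.C x, Polynomial.X] H
        - aeval ![Polynomial.C 0, Polynomial.X] H with hrdef
      have hr : ∀ b : ℂ, r.eval b = eval ![x, b] H - eval ![0, b] H := by
        intro b
        rw [hrdef]
        simp only [Polynomial.eval_sub]
        rw [NonCartAux.eval_aeval_poly' _ ![x, b] b (by intro i; fin_cases i <;> simp),
          NonCartAux.eval_aeval_poly' _ ![0, b] b (by intro i; fin_cases i <;> simp)]
      have hr0 : r = 0 := by
        apply Polynomial.eq_zero_of_infinite_isRoot
        apply hDc.mono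
        intro b hb
        simp only [Set.mem_setOf_eq, Polynomial.IsRoot]
        rw [hr b, hconst b hb x]
        ring
      have h0 := hr a
      rw [hr0] at h0
      simp only [Polynomial.eval_zero] at h0
      linear_combination -h0
    set q : Polynomial ℂ := aeval ![Polynomial.C 0, Polynomial.X] H with hqdef
    have hq : ∀ a : ℂ, q.eval a = eval ![0, a] H := by
      intro a
      apply NonCartAux.eval_aeval_poly'
      intro i; fin_cases i <;> simp
    by_cases hqd : 0 < q.degree
    · obtain ⟨a0, ha0⟩ := Complex.exists_root hqd
      exact Set.infinite_of_injOn_mapsTo (f := fun x : ℂ => (x, a0))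
        (fun a _ b _ hab => congrArg Prod.fst hab)
        (fun x _ => by
          simp only [Set.mem_setOf_eq]
          rw [hall x a0, ← hq a0]
          exact ha0)
        Set.infinite_univ
    · exfalso
      have hdeg : q.degree ≤ 0 := le_of_not_gt hqd
      obtain ⟨c0, hc0⟩ : ∃ c0, q = Polynomial.C c0 := ⟨_, Polynomial.eq_C_of_degree_le_zero hdeg⟩
      apply hH c0
      apply MvPolynomial.funext
      intro v
      have hv : ![v 0, v 1] = v := by funext i; fin_cases i <;> simp
      rw [MvPolynomial.eval_C, ← hv, hall (v 0) (v 1), ← hq (v 1), hc0, Polynomial.eval_C]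

lemma NonCartAux.spec_rename01 (p : ℂ × ℂ) (G : MvPolynomial (Fin 2) ℂ) :
    specializeZT p (MvPolynomial.rename (![0, 1] : Fin 2 → Fin 4) G) = G := by
  unfold specializeZT
  rw [aeval_rename]
  have h1 : ((![MvPolynomial.X 0, MvPolynomial.X 1, MvPolynomial.C p.1, MvPolynomial.C p.2] :
      Fin 4 → MvPolynomial (Fin 2) ℂ) ∘ (![0, 1] : Fin 2 → Fin 4)) = X := by
    funext i; fin_cases i <;> simp
  rw [h1, aeval_X_left, AlgHom.id_apply]

lemma NonCartAux.spec_rename23 (p : ℂ × ℂ) (H : MvPolynomial (Fin 2) ℂ) :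
    specializeZT p (MvPolynomial.rename (![2, 3] : Fin 2 → Fin 4) H)
      = C (eval ![p.1, p.2] H) := by
  unfold specializeZT
  rw [aeval_rename]
  have h1 : ((![MvPolynomial.X 0, MvPolynomial.X 1, MvPolynomial.C p.1, MvPolynomial.C p.2] :
      Fin 4 → MvPolynomial (Fin 2) ℂ) ∘ (![2, 3] : Fin 2 → Fin 4))
      = fun i => C (![p.1, p.2] i) := by
    funext i; fin_cases i <;> simp
  rw [h1]
  have key : (MvPolynomial.aeval (fun i => (C (![p.1, p.2] i) : MvPolynomial (Fin 2) ℂ)))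
      = (Algebra.ofId ℂ (MvPolynomial (Fin 2) ℂ)).comp (MvPolynomial.aeval ![p.1, p.2]) := by
    apply MvPolynomial.algHom_ext
    intro i
    simp [Algebra.ofId_apply, MvPolynomial.algebraMap_eq]
  rw [key]
  simp only [AlgHom.comp_apply]
  rw [show (MvPolynomial.aeval ![p.1, p.2] H : ℂ) = MvPolynomial.eval ![p.1, p.2] H from by
      rw [← MvPolynomial.coe_aeval_eq_eval]; rfl]
  simp [Algebra.ofId_apply, MvPolynomial.algebraMap_eq]

lemma NonCartAux.spec_add (p : ℂ × ℂ) (a b : MvPolynomial (Fin 4) ℂ) :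
    specializeZT p (a + b) = specializeZT p a + specializeZT p b := by
  unfold specializeZT; rw [map_add]

lemma NonCartAux.spec_mul (p : ℂ × ℂ) (a b : MvPolynomial (Fin 4) ℂ) :
    specializeZT p (a * b) = specializeZT p a * specializeZT p b := by
  unfold specializeZT; rw [map_mul]

/-- Sufficient criterion for being non-Cartesian (Theorem 3.1):
a nonzero irreducible `F ∉ ℂ[z,t]` such that only finitely many specializations
`F(x,y,z0,t0)` are reducible, and for each `(z0,t0)` only finitely many `(z1,t1)` give a
scalar multiple of the same specialization, is non-Cartesian. -/
theorem non_cartesian_of_sufficient_conditions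
    (F : MvPolynomial (Fin 4) ℂ) (hF0 : F ≠ 0)
    (h1irr : Irreducible F)
    (h1zt : ¬ ∃ W : MvPolynomial (Fin 2) ℂ,
      F = MvPolynomial.rename (![2, 3] : Fin 2 → Fin 4) W)
    (h2 : {p : ℂ × ℂ | ¬ Irreducible (specializeZT p F)}.Finite)
    (h3 : ∀ p : ℂ × ℂ,
      {q : ℂ × ℂ | ∃ lam : ℂ,
        specializeZT p F = MvPolynomial.C lam * specializeZT q F}.Finite) :
    ¬ IsCartesian F := by
  rintro ⟨G, H, F1, F2, hG, hH, hFeq⟩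
  -- specializations of F
  have key : ∀ p : ℂ × ℂ, specializeZT p F
      = G * specializeZT p F1 + C (eval ![p.1, p.2] H) * specializeZT p F2 := by
    intro p
    conv_lhs => rw [hFeq]
    rw [NonCartAux.spec_add, NonCartAux.spec_mul, NonCartAux.spec_mul,
      NonCartAux.spec_rename01, NonCartAux.spec_rename23]
  -- G is not a unit
  have hGnu : ¬ IsUnit G := by
    intro h
    obtain ⟨c, _, hc⟩ := NonCartAux.isUnit_eq_C h
    exact hG c hc
  -- no specialization of F is zero
  have hspec0 : ∀ p : ℂ × ℂ, specializeZT p F ≠ 0 := by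
    intro p h0
    have hsub : (Set.univ : Set (ℂ × ℂ)) ⊆
        {q : ℂ × ℂ | ∃ lam : ℂ, specializeZT p F = C lam * specializeZT q F} := by
      intro q _
      exact ⟨0, by rw [h0]; simp⟩
    exact (Set.infinite_univ.mono hsub) (h3 p)
  -- the zero set of H
  have hS : {p : ℂ × ℂ | eval ![p.1, p.2] H = 0}.Infinite := NonCartAux.zero_set_infinite hH
  -- on the zero set minus the bad set, specializations are nonzero constants times G
  have hT : ({p : ℂ × ℂ | eval ![p.1, p.2] H = 0}
      \ {p : ℂ × ℂ | ¬ Irreducible (specializeZT p F)}).Infinite := hS.diff h2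
  have hTc : ∀ p ∈ ({p : ℂ × ℂ | eval ![p.1, p.2] H = 0}
      \ {p : ℂ × ℂ | ¬ Irreducible (specializeZT p F)}),
      ∃ c : ℂ, c ≠ 0 ∧ specializeZT p F = C c * G := by
    rintro p ⟨hp1, hp2⟩
    simp only [Set.mem_setOf_eq] at hp1
    simp only [Set.mem_setOf_eq, not_not] at hp2
    have hpeq : specializeZT p F = G * specializeZT p F1 := by
      rw [key p, hp1]
      simp
    rcases hp2.isUnit_or_isUnit hpeq with h | h
    · exact absurd h hGnu
    · obtain ⟨c, hc0, hc⟩ := NonCartAux.isUnit_eq_C h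
      exact ⟨c, hc0, by rw [hpeq, hc, mul_comm]⟩
  obtain ⟨p0, hp0⟩ := hT.nonempty
  obtain ⟨c0, hc00, hc0⟩ := hTc p0 hp0
  have hsub : ({p : ℂ × ℂ | eval ![p.1, p.2] H = 0}
      \ {p : ℂ × ℂ | ¬ Irreducible (specializeZT p F)}) ⊆
      {q : ℂ × ℂ | ∃ lam : ℂ, specializeZT p0 F = C lam * specializeZT q F} := by
    intro q hq
    obtain ⟨cq, hcq0, hcq⟩ := hTc q hq
    refine ⟨c0 * cq⁻¹, ?_⟩
    rw [hc0, hcq, ← mul_assoc, ← map_mul]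
    congr 2
    field_simp
  exact (hT.mono hsub) (h3 p0)
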